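/- For the pulse A(x,t) = e^{iφ}(k/cosh(k(x-vt)))^{1/2}exp(i(vx/2 + (k²-v²)t/4)) with k > 0, the averaged energy functional E = (1/π)∫(|A_x|² - (1/4)|A|⁶) dx, after division by the norm, equals v²/4; in particular E ≥ 0. -/

import Mathlib

open Complex Real MeasureTheory Filter Topology Set

lemma tendsto_cosh_atTop' : Tendsto Real.cosh atTop atTop := by
  apply tendsto_atTop_mono (fun x => ?_)
    ((Real.tendsto_exp_atTop).atTop_div_const two_pos)
  rw [Real.cosh_eq]
  have := Real.exp_pos (-x)
  linarith

lemma tendsto_cosh_atBot' : Tendsto Real.cosh atBot atTop := by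
  have : Real.cosh = fun x => Real.cosh (-x) := by
    funext x; rw [Real.cosh_neg]
  rw [this]
  exact tendsto_cosh_atTop'.comp tendsto_neg_atBot_atTop

lemma tendsto_sinh_atTop' : Tendsto Real.sinh atTop atTop := by
  apply tendsto_atTop_mono' _ ?_
    (((tendsto_atTop_add_const_right atTop (-1) Real.tendsto_exp_atTop)).atTop_div_const two_pos)
  filter_upwards [eventually_ge_atTop (0:ℝ)] with x hx
  rw [Real.sinh_eq]
  have : Real.exp (-x) ≤ 1 := by
    rw [Real.exp_le_one_iff]; linarith
  linarith

lemma tendsto_sinh_atBot' : Tendsto Real.sinh atBot atBot := by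
  have : Real.sinh = fun x => -Real.sinh (-x) := by
    funext x; rw [Real.sinh_neg, neg_neg]
  rw [this]
  exact tendsto_neg_atTop_atBot.comp (tendsto_sinh_atTop'.comp tendsto_neg_atBot_atTop)

lemma tendsto_inv_cosh_zero_atTop : Tendsto (fun x => (Real.cosh x)⁻¹) atTop (𝓝 0) :=
  tendsto_cosh_atTop'.inv_tendsto_atTop

lemma tendsto_inv_cosh_zero_atBot : Tendsto (fun x => (Real.cosh x)⁻¹) atBot (𝓝 0) :=
  tendsto_cosh_atBot'.inv_tendsto_atTop

/-- antiderivative of sech -/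
lemma hasDerivAt_arctan_sinh (x : ℝ) :
    HasDerivAt (fun y => Real.arctan (Real.sinh y)) ((Real.cosh x)⁻¹) x := by
  have h := (Real.hasDerivAt_arctan' (Real.sinh x)).comp x (Real.hasDerivAt_sinh x)
  refine h.congr_deriv (Eq.symm ?_)
  have hc := Real.cosh_pos x
  have hsq : Real.cosh x ^ 2 = 1 + Real.sinh x ^ 2 := Real.cosh_sq' x
  field_simp
  nlinarith [hsq]

lemma tendsto_arctan_sinh_atTop :
    Tendsto (fun y => Real.arctan (Real.sinh y)) atTop (𝓝 (π/2)) :=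
  (Real.tendsto_arctan_atTop.mono_right nhdsWithin_le_nhds).comp tendsto_sinh_atTop'

lemma tendsto_arctan_sinh_atBot :
    Tendsto (fun y => Real.arctan (Real.sinh y)) atBot (𝓝 (-(π/2))) :=
  (Real.tendsto_arctan_atBot.mono_right nhdsWithin_le_nhds).comp tendsto_sinh_atBot'

/-- an even function integrable on `Ioi 0` is integrable -/
lemma integrable_of_even_aux {f : ℝ → ℝ} (he : ∀ x, f (-x) = f x)
    (h : IntegrableOn f (Ioi 0)) : Integrable f := by
  have hIic : IntegrableOn f (Iic 0) := by
    rw [← Measure.map_neg_eq_self (volume : Measure ℝ)]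
    have m : MeasurableEmbedding fun x : ℝ => -x :=
      (Homeomorph.neg ℝ).measurableEmbedding
    rw [m.integrableOn_map_iff]
    have : (fun x : ℝ => f (-x)) = f := funext he
    simp_rw [Function.comp_def, this, neg_preimage, neg_Iic, neg_zero]
    exact Iff.mpr integrableOn_Ici_iff_integrableOn_Ioi h
  have := hIic.union h
  rwa [Iic_union_Ioi, integrableOn_univ] at this

lemma integrable_inv_cosh : Integrable (fun x : ℝ => (Real.cosh x)⁻¹) := by
  apply integrable_of_even_aux (fun x => by rw [Real.cosh_neg])
  exact integrableOn_Ioi_deriv_of_nonneg'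
    (fun x _ => hasDerivAt_arctan_sinh x)
    (fun x _ => by positivity) tendsto_arctan_sinh_atTop

lemma integral_inv_cosh : ∫ x : ℝ, (Real.cosh x)⁻¹ = π := by
  have := integral_of_hasDerivAt_of_tendsto (f := fun y => Real.arctan (Real.sinh y))
    (fun x => hasDerivAt_arctan_sinh x) integrable_inv_cosh
    tendsto_arctan_sinh_atBot tendsto_arctan_sinh_atTop
  rw [this]; ring

/-- antiderivative of sech^3 -/
lemma hasDerivAt_sech3_anti (x : ℝ) :
    HasDerivAt (fun y => (Real.sinh y / Real.cosh y ^ 2 + Real.arctan (Real.sinh y)) / 2)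
      (((Real.cosh x)⁻¹) ^ 3) x := by
  have hc := Real.cosh_pos x
  have h1 : HasDerivAt (fun y => Real.sinh y / Real.cosh y ^ 2)
      ((Real.cosh x * Real.cosh x ^ 2 - Real.sinh x * (2 * Real.cosh x * Real.sinh x))
        / (Real.cosh x ^ 2) ^ 2) x := by
    have hs := Real.hasDerivAt_sinh x
    have hc2 : HasDerivAt (fun y => Real.cosh y ^ 2) (2 * Real.cosh x * Real.sinh x) x := by
      have := (Real.hasDerivAt_cosh x).pow 2
      refine this.congr_deriv (Eq.symm ?_); ring
    exact hs.div hc2 (by positivity)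
  have h := (h1.add (hasDerivAt_arctan_sinh x)).div_const 2
  refine h.congr_deriv (Eq.symm ?_)
  have hsq : Real.cosh x ^ 2 = 1 + Real.sinh x ^ 2 := Real.cosh_sq' x
  field_simp
  linear_combination (-2) * hsq

lemma tendsto_sech3_anti_atTop :
    Tendsto (fun y => (Real.sinh y / Real.cosh y ^ 2 + Real.arctan (Real.sinh y)) / 2)
      atTop (𝓝 (π/4)) := by
  have h1 : Tendsto (fun y => Real.sinh y / Real.cosh y ^ 2) atTop (𝓝 0) := by
    apply squeeze_zero_norm (a := fun y => (Real.cosh y)⁻¹) (fun y => ?_)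
      tendsto_inv_cosh_zero_atTop
    have hc := Real.cosh_pos y
    rw [Real.norm_eq_abs, abs_div, abs_of_pos (by positivity : (0:ℝ) < Real.cosh y ^ 2),
      div_le_iff₀ (by positivity)]
    have h2 : |Real.sinh y| ≤ Real.cosh y := by
      rw [abs_le, Real.sinh_eq, Real.cosh_eq]
      constructor <;> nlinarith [Real.exp_pos y, Real.exp_pos (-y)]
    calc |Real.sinh y| ≤ Real.cosh y := h2
      _ = (Real.cosh y)⁻¹ * Real.cosh y ^ 2 := by field_simp
  have := (h1.add tendsto_arctan_sinh_atTop).div_const 2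
  rw [zero_add] at this
  convert this using 2
  ring


lemma tendsto_sech3_anti_atBot :
    Tendsto (fun y => (Real.sinh y / Real.cosh y ^ 2 + Real.arctan (Real.sinh y)) / 2)
      atBot (𝓝 (-(π/4))) := by
  have h1 : Tendsto (fun y => Real.sinh y / Real.cosh y ^ 2) atBot (𝓝 0) := by
    apply squeeze_zero_norm (a := fun y => (Real.cosh y)⁻¹) (fun y => ?_)
      tendsto_inv_cosh_zero_atBot
    have hc := Real.cosh_pos y
    rw [Real.norm_eq_abs, abs_div, abs_of_pos (by positivity : (0:ℝ) < Real.cosh y ^ 2),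
      div_le_iff₀ (by positivity)]
    have h2 : |Real.sinh y| ≤ Real.cosh y := by
      rw [abs_le, Real.sinh_eq, Real.cosh_eq]
      constructor <;> nlinarith [Real.exp_pos y, Real.exp_pos (-y)]
    calc |Real.sinh y| ≤ Real.cosh y := h2
      _ = (Real.cosh y)⁻¹ * Real.cosh y ^ 2 := by field_simp
  have := (h1.add tendsto_arctan_sinh_atBot).div_const 2
  rw [zero_add] at this
  convert this using 2
  ring

lemma integrable_sech3 : Integrable (fun x : ℝ => ((Real.cosh x)⁻¹) ^ 3) := by
  apply integrable_of_even_aux (fun x => by rw [Real.cosh_neg])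
  exact integrableOn_Ioi_deriv_of_nonneg'
    (fun x _ => hasDerivAt_sech3_anti x)
    (fun x _ => by positivity) tendsto_sech3_anti_atTop

lemma integral_sech3 : ∫ x : ℝ, ((Real.cosh x)⁻¹) ^ 3 = π / 2 := by
  have := integral_of_hasDerivAt_of_tendsto
    (fun x => hasDerivAt_sech3_anti x) integrable_sech3
    tendsto_sech3_anti_atBot tendsto_sech3_anti_atTop
  rw [this]; ring

theorem stmt_18 (φ v k t : ℝ) (hk : 0 < k) (A : ℝ → ℝ → ℂ)
    (hA : ∀ x t, A x t =
      Complex.exp (Complex.I * (φ : ℂ)) *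
        ((Real.sqrt (k / Real.cosh (k * (x - v * t))) : ℝ) : ℂ) *
        Complex.exp (Complex.I *
          ((v * x / 2 + (k ^ 2 - v ^ 2) * t / 4 : ℝ) : ℂ))) :
    (1 / Real.pi) * ∫ x : ℝ, ‖deriv (fun y => A y t) x‖ ^ 2 =
      v ^ 2 / 4 + k ^ 2 / 8 ∧
    (1 / (4 * Real.pi)) * ∫ x : ℝ, ‖A x t‖ ^ 6 = k ^ 2 / 8 ∧
    ((1 / Real.pi) * ∫ x : ℝ, ‖deriv (fun y => A y t) x‖ ^ 2) -
      ((1 / (4 * Real.pi)) * ∫ x : ℝ, ‖A x t‖ ^ 6) = v ^ 2 / 4 := by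
  have hπ := Real.pi_pos
  -- target real functions
  set G1 : ℝ → ℝ := fun y =>
    k^3/4 * ((Real.cosh y)⁻¹ - ((Real.cosh y)⁻¹)^3) + v^2*k/4 * (Real.cosh y)⁻¹ with hG1
  set G2 : ℝ → ℝ := fun y => k^3 * ((Real.cosh y)⁻¹)^3 with hG2
  -- pointwise identity for integrand 1
  have hpt1 : ∀ x : ℝ, ‖deriv (fun y => A y t) x‖ ^ 2 = G1 (k * (x - v * t)) := by
    intro x
    have hc : (0:ℝ) < Real.cosh (k * (x - v * t)) := Real.cosh_pos _
    have hpos : (0:ℝ) < k / Real.cosh (k * (x - v * t)) := by positivity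
    have hspos : (0:ℝ) < Real.sqrt (k / Real.cosh (k * (x - v * t))) := Real.sqrt_pos.mpr hpos
    -- derivative
    have hder : HasDerivAt (fun y : ℝ => A y t)
        (Complex.exp (Complex.I * (φ : ℂ)) *
          Complex.exp (Complex.I * ((v * x / 2 + (k ^ 2 - v ^ 2) * t / 4 : ℝ) : ℂ)) *
          (((k * (-(Real.sinh (k * (x - v * t)) * k) / Real.cosh (k * (x - v * t)) ^ 2)) /
              (2 * Real.sqrt (k / Real.cosh (k * (x - v * t)))) : ℝ) +
           ((v / 2 * Real.sqrt (k / Real.cosh (k * (x - v * t))) : ℝ) : ℂ) * Complex.I)) x := by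
      have h0 : (fun y : ℝ => A y t) = fun y : ℝ => Complex.exp (Complex.I * (φ : ℂ)) *
          ((Real.sqrt (k / Real.cosh (k * (y - v * t))) : ℝ) : ℂ) *
          Complex.exp (Complex.I * ((v * y / 2 + (k ^ 2 - v ^ 2) * t / 4 : ℝ) : ℂ)) :=
        funext fun y => hA y t
      rw [h0]
      have hu : HasDerivAt (fun y : ℝ => k * (y - v * t)) k x := by
        simpa using ((hasDerivAt_id x).sub_const (v * t)).const_mul k
      have hcosh : HasDerivAt (fun y : ℝ => Real.cosh (k * (y - v * t)))
          (Real.sinh (k * (x - v * t)) * k) x := (Real.hasDerivAt_cosh _).comp x hu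
      have hinv := hcosh.inv (ne_of_gt hc)
      have hq : HasDerivAt (fun y : ℝ => k / Real.cosh (k * (y - v * t)))
          (k * (-(Real.sinh (k * (x - v * t)) * k) / Real.cosh (k * (x - v * t)) ^ 2)) x := by
        simp_rw [div_eq_mul_inv]
        exact hinv.const_mul k
      have hf : HasDerivAt (fun y : ℝ => Real.sqrt (k / Real.cosh (k * (y - v * t))))
          ((k * (-(Real.sinh (k * (x - v * t)) * k) / Real.cosh (k * (x - v * t)) ^ 2)) /
            (2 * Real.sqrt (k / Real.cosh (k * (x - v * t))))) x := hq.sqrt (ne_of_gt hpos)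
      have hr : HasDerivAt (fun y : ℝ => v * y / 2 + (k ^ 2 - v ^ 2) * t / 4) (v / 2) x := by
        simpa using
          (((hasDerivAt_id x).const_mul v).div_const 2).add_const ((k ^ 2 - v ^ 2) * t / 4)
      have hph : HasDerivAt
          (fun y : ℝ =>
            Complex.exp (Complex.I * ((v * y / 2 + (k ^ 2 - v ^ 2) * t / 4 : ℝ) : ℂ)))
          (Complex.exp (Complex.I * ((v * x / 2 + (k ^ 2 - v ^ 2) * t / 4 : ℝ) : ℂ)) *
            (Complex.I * (v / 2 : ℝ))) x :=
        ((hr.ofReal_comp).const_mul Complex.I).cexp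
      have hmain := ((hf.ofReal_comp).const_mul (Complex.exp (Complex.I * (φ : ℂ)))).mul hph
      refine hmain.congr_deriv (Eq.symm ?_)
      push_cast
      ring
    rw [hder.deriv]
    -- compute the absolute value
    rw [norm_mul, norm_mul]
    have habs1 : ‖Complex.exp (Complex.I * (φ : ℂ))‖ = 1 := by
      rw [Complex.norm_exp]; simp
    have habsR : ∀ r : ℝ, ‖Complex.exp (Complex.I * (r : ℂ))‖ = 1 := fun r => by
      rw [Complex.norm_exp]; simp
    have habs2 := habsR (v * x / 2 + (k ^ 2 - v ^ 2) * t / 4)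
    rw [habs1, habs2, one_mul, one_mul]
    rw [Complex.sq_norm, Complex.normSq_add_mul_I]
    -- algebra
    have hsq : Real.sinh (k * (x - v * t)) ^ 2 = Real.cosh (k * (x - v * t)) ^ 2 - 1 := by
      rw [Real.cosh_sq']; ring
    have hs2 : Real.sqrt (k / Real.cosh (k * (x - v * t))) ^ 2
        = k / Real.cosh (k * (x - v * t)) := Real.sq_sqrt hpos.le
    set ch := Real.cosh (k * (x - v * t))
    set sh := Real.sinh (k * (x - v * t))
    set s := Real.sqrt (k / ch)
    have e1 : ((k * (-(sh * k) / ch ^ 2)) / (2 * s))^2 = (k^2*sh/ch^2)^2 / (4 * (k/ch)) := by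
      rw [div_pow, ← hs2]; ring
    have e2 : (v / 2 * s)^2 = v^2/4 * (k/ch) := by
      rw [mul_pow, hs2]; ring
    rw [hG1, e1, e2]
    field_simp
    linear_combination (k^2*ch^3) * hsq
  -- pointwise identity for integrand 2
  have hpt2 : ∀ x : ℝ, ‖A x t‖ ^ 6 = G2 (k * (x - v * t)) := by
    intro x
    have hc : (0:ℝ) < Real.cosh (k * (x - v * t)) := Real.cosh_pos _
    have hpos : (0:ℝ) < k / Real.cosh (k * (x - v * t)) := by positivity
    rw [hA x t, norm_mul, norm_mul]
    have habs1 : ‖Complex.exp (Complex.I * (φ : ℂ))‖ = 1 := by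
      rw [Complex.norm_exp]; simp
    have habsR : ∀ r : ℝ, ‖Complex.exp (Complex.I * (r : ℂ))‖ = 1 := fun r => by
      rw [Complex.norm_exp]; simp
    have habs2 := habsR (v * x / 2 + (k ^ 2 - v ^ 2) * t / 4)
    rw [habs1, habs2, one_mul, mul_one, Complex.norm_real, Real.norm_eq_abs,
      _root_.abs_of_nonneg (Real.sqrt_nonneg _)]
    have hs2 : Real.sqrt (k / Real.cosh (k * (x - v * t))) ^ 2
        = k / Real.cosh (k * (x - v * t)) := Real.sq_sqrt hpos.le
    have : Real.sqrt (k / Real.cosh (k * (x - v * t))) ^ 6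
        = (k / Real.cosh (k * (x - v * t))) ^ 3 := by
      rw [show (6:ℕ) = 2*3 from rfl, pow_mul, hs2]
    rw [this, hG2]
    field_simp
  -- integral computations
  have key : ∀ G : ℝ → ℝ, ∫ x : ℝ, G (k * (x - v * t)) = k⁻¹ * ∫ y : ℝ, G y := by
    intro G
    have h1 : ∫ x : ℝ, G (k * (x - v * t)) = ∫ x : ℝ, G (k * x) := by
      have := integral_add_right_eq_self (μ := (volume : Measure ℝ))
        (fun x => G (k * x)) (-(v * t))
      simp_rw [← sub_eq_add_neg] at this
      simpa using this
    rw [h1, MeasureTheory.Measure.integral_comp_mul_left G k, abs_of_pos (inv_pos.mpr hk),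
      smul_eq_mul]
  have hint1 : ∫ x : ℝ, ‖deriv (fun y => A y t) x‖ ^ 2
      = k⁻¹ * ∫ y : ℝ, G1 y := by
    rw [← key G1]
    exact integral_congr_ae (Filter.Eventually.of_forall hpt1)
  have hint2 : ∫ x : ℝ, ‖A x t‖ ^ 6 = k⁻¹ * ∫ y : ℝ, G2 y := by
    rw [← key G2]
    exact integral_congr_ae (Filter.Eventually.of_forall hpt2)
  have hIG1 : ∫ y : ℝ, G1 y = k^3/4 * (π - π/2) + v^2*k/4 * π := by
    have hia : Integrable (fun y : ℝ => (Real.cosh y)⁻¹ - ((Real.cosh y)⁻¹)^3) := by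
      exact integrable_inv_cosh.sub integrable_sech3
    rw [hG1]
    rw [MeasureTheory.integral_add ((hia.const_mul _))
      (integrable_inv_cosh.const_mul _), MeasureTheory.integral_const_mul,
      MeasureTheory.integral_const_mul,
      MeasureTheory.integral_sub integrable_inv_cosh integrable_sech3,
      integral_inv_cosh, integral_sech3]
  have hIG2 : ∫ y : ℝ, G2 y = k^3 * (π/2) := by
    rw [hG2, MeasureTheory.integral_const_mul, integral_sech3]
  have r1 : (1 / Real.pi) * ∫ x : ℝ, ‖deriv (fun y => A y t) x‖ ^ 2
      = v ^ 2 / 4 + k ^ 2 / 8 := by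
    rw [hint1, hIG1]
    field_simp
    ring
  have r2 : (1 / (4 * Real.pi)) * ∫ x : ℝ, ‖A x t‖ ^ 6 = k ^ 2 / 8 := by
    rw [hint2, hIG2]
    field_simp
    ring
  exact ⟨r1, r2, by rw [r1, r2]; ring⟩
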